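/- Let Π be a finite simple graph, W = W(Π) the associated simply-laced Coxeter group, (u,v) ∈ W × W with m = ℓ(u) + ℓ(v), and i ∈ R(u,v) a reduced word. Then for any non-empty subset S ⊆ B(i), there exists a vertex a ∈ [1,m] \ S such that {a,b} is an edge of Σ(i) for exactly one b ∈ S. -/

import Mathlib

open scoped Classical

namespace SLC

variable {V : Type*} [DecidableEq V]

/-- The simply-laced Coxeter matrix associated with a simple graph `P`:
`M i i = 1`, `M i j = 3` if `i` and `j` are adjacent, and `M i j = 2` otherwise. -/
noncomputable def coxeterMatrix (P : SimpleGraph V) : CoxeterMatrix V where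
  M := fun i j => if i = j then 1 else if P.Adj i j then 3 else 2
  isSymm := by
    refine Matrix.IsSymm.ext fun i j => ?_
    show (if j = i then 1 else if P.Adj j i then 3 else 2) =
      (if i = j then 1 else if P.Adj i j then 3 else 2)
    by_cases h : i = j
    · subst h; rfl
    · rw [if_neg (Ne.symm h), if_neg h]
      by_cases ha : P.Adj i j
      · rw [if_pos (P.adj_symm ha), if_pos ha]
      · rw [if_neg (fun hc => ha (P.adj_symm hc)), if_neg ha]
  diagonal := by intro i; simp
  off_diagonal := by
    intro i i' h
    show (if i = i' then 1 else if P.Adj i i' then 3 else 2) ≠ 1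
    rw [if_neg h]
    split <;> omega

/-- `e` is a reduced word for the pair `(u, v)`: the subword of entries with negative sign
(first component `false`), with signs forgotten, is a reduced word for `u`, and the subword of
entries with positive sign is a reduced word for `v`. -/
def IsRWordPair {W : Type*} [Group W] (P : SimpleGraph V)
    (cs : CoxeterSystem (coxeterMatrix P) W) (u v : W) {m : ℕ}
    (e : Fin m → Bool × V) : Prop :=
  cs.wordProd (((List.ofFn e).filter fun p => !p.1).map Prod.snd) = u ∧
    (((List.ofFn e).filter fun p => !p.1).map Prod.snd).length = cs.length u ∧
    cs.wordProd (((List.ofFn e).filter fun p => p.1).map Prod.snd) = v ∧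
    (((List.ofFn e).filter fun p => p.1).map Prod.snd).length = cs.length v

/-- `k = l⁻`: `k` is the largest index smaller than `l` carrying the same letter of `P`. -/
def IsPred {m : ℕ} (e : Fin m → Bool × V) (k l : Fin m) : Prop :=
  k < l ∧ (e k).2 = (e l).2 ∧ ∀ j, k < j → j < l → (e j).2 ≠ (e l).2

/-- The index `l` is `e`-bounded: `l⁻ > 0`, i.e. `l` has a predecessor. -/
def BoundedIdx {m : ℕ} (e : Fin m → Bool × V) (l : Fin m) : Prop :=
  ∃ k, IsPred e k l

/-- Conditions (ii) and (iii) of Definition 3.1 (inclined edges), for `k < l`. -/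
def InclCond {m : ℕ} (P : SimpleGraph V) (e : Fin m → Bool × V) (k l : Fin m) : Prop :=
  k < l ∧ P.Adj (e k).2 (e l).2 ∧
    ((∃ p, IsPred e p l ∧ p < k ∧ (∀ q, IsPred e q k → q < p) ∧ (e p).1 = (e k).1) ∨
     (∃ q, IsPred e q k ∧ (∀ p, IsPred e p l → p < q) ∧ (e q).1 = !(e k).1))

/-- `a → b` is a directed edge of the graph `Σ(e)`. -/
def DirEdge {m : ℕ} (P : SimpleGraph V) (e : Fin m → Bool × V) (a b : Fin m) : Prop :=
  (IsPred e a b ∧ (e a).1 = true) ∨ (IsPred e b a ∧ (e b).1 = false) ∨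
    (InclCond P e a b ∧ (e a).1 = false) ∨ (InclCond P e b a ∧ (e b).1 = true)

/-- `{a, b}` is an edge of the graph `Σ(e)` (in some direction). -/
def UEdge {m : ℕ} (P : SimpleGraph V) (e : Fin m → Bool × V) (a b : Fin m) : Prop :=
  DirEdge P e a b ∨ DirEdge P e b a

/-- Adjacency in the doubled graph `P̃`. -/
def TAdj (P : SimpleGraph V) (p q : Bool × V) : Prop :=
  p.1 = q.1 ∧ P.Adj p.2 q.2

/-- The negative of a letter of `P̃`. -/
def negEnt (p : Bool × V) : Bool × V := (!p.1, p.2)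

/-- The combinatorial data of a 2- or 3-move: the (consecutive) positions involved. -/
inductive MoveSpec (m : ℕ) where
  | two (a b : Fin m)
  | three (a b c : Fin m)

/-- The position of a move (the last of the positions involved). -/
def MoveSpec.pos {m : ℕ} : MoveSpec m → Fin m
  | .two _ b => b
  | .three _ _ c => c

/-- `e'` is obtained from `e` by the 2- or 3-move described by `s`. -/
def IsMove {m : ℕ} (P : SimpleGraph V) (e e' : Fin m → Bool × V) : MoveSpec m → Prop
  | .two a b => (b : ℕ) = (a : ℕ) + 1 ∧ ¬ TAdj P (e a) (e b) ∧
      e' a = e b ∧ e' b = e a ∧ ∀ l, l ≠ a → l ≠ b → e' l = e l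
  | .three a b c => (b : ℕ) = (a : ℕ) + 1 ∧ (c : ℕ) = (b : ℕ) + 1 ∧
      e c = e a ∧ TAdj P (e b) (e c) ∧
      e' a = e b ∧ e' b = e a ∧ e' c = e b ∧ ∀ l, l ≠ a → l ≠ b → l ≠ c → e' l = e l

/-- A move is trivial if it is a 2-move interchanging entries which are not opposite. -/
def MoveTrivial {m : ℕ} (e : Fin m → Bool × V) : MoveSpec m → Prop
  | .two a b => e b ≠ negEnt (e a)
  | .three _ _ _ => False

/-- The permutation `σ` associated with a move. -/
noncomputable def moveSigma {m : ℕ} (e : Fin m → Bool × V) : MoveSpec m → Equiv.Perm (Fin m)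
  | .two a b => if e b = negEnt (e a) then 1 else Equiv.swap a b
  | .three a b _ => Equiv.swap a b

/-- The skew-symmetric form `Ω` of the graph `Σ(e)`, over a commutative ring `R`. -/
noncomputable def omegaForm (R : Type*) [CommRing R] {m : ℕ} (P : SimpleGraph V)
    (e : Fin m → Bool × V) (x y : Fin m → R) : R :=
  ∑ a : Fin m, ∑ b : Fin m, if DirEdge P e a b then x a * y b - x b * y a else 0

/-- The symplectic transvection `τ_k` of the graph `Σ(e)`, over `R`. -/
noncomputable def transv (R : Type*) [CommRing R] {m : ℕ} (P : SimpleGraph V)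
    (e : Fin m → Bool × V) (k : Fin m) (x : Fin m → R) : Fin m → R :=
  x - omegaForm R P e x (Pi.single k 1) • (Pi.single k 1 : Fin m → R)

/-- The group `Γ_e ⊆ GL_m(ℤ)` generated by the transvections `τ_k`, `k ∈ B(e)`. -/
noncomputable def Gamma {m : ℕ} (P : SimpleGraph V) (e : Fin m → Bool × V) :
    Subgroup ((Fin m → ℤ) ≃ₗ[ℤ] (Fin m → ℤ)) :=
  Subgroup.closure {g | ∃ k, BoundedIdx e k ∧ ⇑g = transv ℤ P e k}

/-- The group `Γ_e(F₂)` of linear transformations of `F₂^m` generated by the reductions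
modulo 2 of the transvections `τ_k`, `k ∈ B(e)`. -/
noncomputable def GammaF2 {m : ℕ} (P : SimpleGraph V) (e : Fin m → Bool × V) :
    Subgroup (Equiv.Perm (Fin m → ZMod 2)) :=
  Subgroup.closure {g | ∃ k, BoundedIdx e k ∧ ⇑g = transv (ZMod 2) P e k}

/-- The map `φ⁺` associated with a move. -/
noncomputable def phiP {m : ℕ} (P : SimpleGraph V) (e : Fin m → Bool × V) (s : MoveSpec m)
    (x : Fin m → ℤ) : Fin m → ℤ := fun l =>
  if l = s.pos ∧ ¬ MoveTrivial e s then
    (∑ a : Fin m, if DirEdge P e a s.pos then x a else 0) - x s.pos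
  else x (moveSigma e s l)

/-- The map `φ⁻` associated with a move. -/
noncomputable def phiM {m : ℕ} (P : SimpleGraph V) (e : Fin m → Bool × V) (s : MoveSpec m)
    (x : Fin m → ℤ) : Fin m → ℤ := fun l =>
  if l = s.pos ∧ ¬ MoveTrivial e s then
    (∑ b : Fin m, if DirEdge P e s.pos b then x b else 0) - x s.pos
  else x (moveSigma e s l)


variable {V : Type*} [DecidableEq V] [Fintype V] {W : Type*} [Group W]

/-- Proposition 3.2: for any non-empty subset `S ⊆ B(i)` there is a vertex `a ∉ S`
joined by an edge of `Σ(i)` to exactly one element of `S`. -/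
theorem boundary_vertex (P : SimpleGraph V) (cs : CoxeterSystem (coxeterMatrix P) W)
    (u v : W) {m : ℕ} (hm : m = cs.length u + cs.length v)
    (e : Fin m → Bool × V) (he : IsRWordPair P cs u v e)
    (S : Set (Fin m)) (hS : S.Nonempty) (hSB : ∀ l ∈ S, BoundedIdx e l) :
    ∃ a ∉ S, ∃! b, b ∈ S ∧ UEdge P e a b := by
  classical
  -- `IsPred` is functional in its first argument
  have predUniq : ∀ {k k' l : Fin m}, IsPred e k l → IsPred e k' l → k = k' := by
    intro k k' l hk hk'
    by_contra hne
    rcases lt_or_gt_of_ne hne with h | h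
    · exact hk.2.2 k' h hk'.1 hk'.2.1
    · exact hk'.2.2 k h hk.1 hk.2.1
  -- `IsPred` is functional in its second argument
  have succUniq : ∀ {k b c : Fin m}, IsPred e k b → IsPred e k c → b = c := by
    intro k b c hb hc
    by_contra hne
    rcases lt_or_gt_of_ne hne with h | h
    · exact hc.2.2 b hb.1 h (hb.2.1.symm.trans hc.2.1)
    · exact hb.2.2 c hc.1 h (hc.2.1.symm.trans hb.2.1)
  -- the set of predecessors of elements of `S`
  set T : Set (Fin m) := {k | ∃ b ∈ S, IsPred e k b} with hTdef
  obtain ⟨b1, hb1S⟩ := hS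
  obtain ⟨k1, hk1⟩ := hSB b1 hb1S
  have hTne : T.Nonempty := ⟨k1, b1, hb1S, hk1⟩
  obtain ⟨a, haT, hamin⟩ := Set.exists_min_image T id (Set.toFinite T) hTne
  obtain ⟨b0, hb0S, hab0⟩ := haT
  have hkey : ∀ c ∈ S, ∀ p, IsPred e p c → a ≤ p := fun c hc p hp => hamin p ⟨c, hc, hp⟩
  have haS : a ∉ S := by
    intro haS
    obtain ⟨q, hq⟩ := hSB a haS
    exact absurd (hkey a haS q hq) (not_le.mpr hq.1)
  -- every element of `S` is strictly greater than `a`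
  have hlt : ∀ c ∈ S, a < c := by
    intro c hc
    obtain ⟨qc, hqc⟩ := hSB c hc
    exact lt_of_le_of_lt (hkey c hc qc hqc) hqc.1
  -- no inclined edge from `a` to an element of `S`
  have hnoIncl : ∀ c ∈ S, ¬ InclCond P e a c := by
    rintro c hc ⟨hac, _, h⟩
    rcases h with ⟨p, hp, hpa, _, _⟩ | ⟨q, hq, hall, _⟩
    · exact absurd (hkey c hc p hp) (not_le.mpr hpa)
    · obtain ⟨qc, hqc⟩ := hSB c hc
      exact absurd (hkey c hc qc hqc) (not_le.mpr ((hall qc hqc).trans hq.1))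
  refine ⟨a, haS, b0, ⟨hb0S, ?_⟩, ?_⟩
  · -- the edge between `a` and `b0`
    rcases Bool.eq_false_or_eq_true (e a).1 with h | h
    · exact Or.inl (Or.inl ⟨hab0, h⟩)
    · exact Or.inr (Or.inr (Or.inl ⟨hab0, h⟩))
  · -- uniqueness
    rintro c ⟨hcS, hcE⟩
    have hac : a < c := hlt c hcS
    have hIP : IsPred e a c → c = b0 := fun h => succUniq h hab0
    rcases hcE with h | h <;>
      rcases h with ⟨h, _⟩ | ⟨h, _⟩ | ⟨h, _⟩ | ⟨h, _⟩
    · exact hIP h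
    · exact absurd h.1 (not_lt.mpr hac.le)
    · exact absurd h (hnoIncl c hcS)
    · exact absurd h.1 (not_lt.mpr hac.le)
    · exact absurd h.1 (not_lt.mpr hac.le)
    · exact hIP h
    · exact absurd h.1 (not_lt.mpr hac.le)
    · exact absurd h (hnoIncl c hcS)


end SLC
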